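/- Let Φ(A) = Σ_{j=1}^M V_j* A V_j be a minimal Kraus representation of a completely positive map Φ on M_N(ℂ). Then Φ is orthogonal, in the Hilbert–Schmidt inner product on linear maps on M_N(ℂ), to every map of the form A ↦ XA + AY (X, Y ∈ M_N(ℂ)) if and only if Tr[V_j] = 0 for every j. -/

import Mathlib

open MeasureTheory Matrix
open scoped ComplexOrder

noncomputable section

/-- The algebra of `N × N` complex matrices. -/
abbrev Mat (N : ℕ) := Matrix (Fin N) (Fin N) ℂ

variable {N : ℕ}

/-- Real power `σ^s` of a positive definite matrix, defined via the spectral decomposition. -/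
noncomputable def mpow (σ : Mat N) (hσ : σ.PosDef) (s : ℝ) : Mat N :=
  (hσ.1.eigenvectorUnitary : Mat N) *
    Matrix.diagonal (fun i => ((hσ.1.eigenvalues i ^ s : ℝ) : ℂ)) *
    star (hσ.1.eigenvectorUnitary : Mat N)

/-- Complete positivity of a linear map on `M_N(ℂ)`: existence of a Kraus representation. -/
def IsCP (Φ : Mat N →ₗ[ℂ] Mat N) : Prop :=
  ∃ (M : ℕ) (V : Fin M → Mat N), ∀ A, Φ A = ∑ j, (V j)ᴴ * A * V j

/-- The KMS inner product `⟨B,A⟩_KMS = Tr[Bᴴ σ^{1/2} A σ^{1/2}]`. -/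
def kmsInner (σ : Mat N) (hσ : σ.PosDef) (B A : Mat N) : ℂ :=
  (Bᴴ * mpow σ hσ (1/2) * A * mpow σ hσ (1/2)).trace

/-- Self-adjointness with respect to the KMS inner product. -/
def IsKMSSelfAdjoint (σ : Mat N) (hσ : σ.PosDef) (Φ : Mat N →ₗ[ℂ] Mat N) : Prop :=
  ∀ A B, kmsInner σ hσ B (Φ A) = kmsInner σ hσ (Φ B) A

/-- The normalized Hilbert–Schmidt inner product of two linear maps on `M_N(ℂ)`, computed
in the orthonormal basis `{√N E_{ij}}` of `M_N(ℂ)` (for `⟨B,A⟩ = N⁻¹ Tr[BᴴA]`). -/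
def superInner (Ψ Φ : Mat N →ₗ[ℂ] Mat N) : ℂ :=
  ((N : ℂ) ^ 2)⁻¹ * ∑ p : Fin N × Fin N, (N : ℂ)⁻¹ *
    (((Ψ ((Real.sqrt N : ℂ) • Matrix.single p.1 p.2 1))ᴴ *
      (Φ ((Real.sqrt N : ℂ) • Matrix.single p.1 p.2 1))).trace)

/-- Orthogonality, in the Hilbert–Schmidt inner product on linear maps, to every map of the
form `A ↦ XA + AY`. -/
def OrthToSandwichFree (Φ : Mat N →ₗ[ℂ] Mat N) : Prop :=
  ∀ X Y : Mat N, superInner Φ (LinearMap.mulLeft ℂ X + LinearMap.mulRight ℂ Y) = 0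

lemma trace_mul_std (A : Mat N) (i j : Fin N) :
    (A * Matrix.single i j (1:ℂ)).trace = A j i := by
  simp only [Matrix.trace, Matrix.diag, Matrix.mul_apply, Matrix.single,
    Matrix.of_apply, mul_ite, mul_one, mul_zero, ite_and]
  rw [Finset.sum_comm]
  simp

lemma std_mul_mul_std (M : Mat N) (i j k l : Fin N) :
    Matrix.single i j (1:ℂ) * M * Matrix.single k l 1 =
      Matrix.single i l (M j k) := by
  ext a b
  simp only [Matrix.mul_apply, Matrix.single, Matrix.of_apply, ite_and,
    ite_mul, mul_ite, one_mul, mul_one, zero_mul, mul_zero]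
  by_cases ha : i = a <;> by_cases hb : l = b <;> simp [ha, hb]

lemma std_conjT (i j : Fin N) :
    (Matrix.single i j (1:ℂ))ᴴ = Matrix.single j i 1 := by
  ext a b
  simp [Matrix.single, Matrix.conjTranspose_apply, and_comm, apply_ite]

lemma std_smul (i j : Fin N) (c : ℂ) :
    Matrix.single i j c = c • Matrix.single i j 1 := by
  rw [Matrix.smul_single, smul_eq_mul, mul_one]

lemma std_sandwich (M : Mat N) (i j : Fin N) :
    Matrix.single j i (1:ℂ) * M * Matrix.single i j 1
      = M i i • Matrix.single j j 1 := by
  rw [std_mul_mul_std, std_smul]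

lemma key_term (V X Y : Mat N) (i j : Fin N) :
    ((Vᴴ * Matrix.single i j 1 * V)ᴴ *
      (X * Matrix.single i j 1 + Matrix.single i j 1 * Y)).trace
    = (V * X) i i * Vᴴ j j + V i i * (Y * Vᴴ) j j := by
  rw [Matrix.conjTranspose_mul, Matrix.conjTranspose_mul, Matrix.conjTranspose_conjTranspose,
    std_conjT, mul_add, Matrix.trace_add]
  have e1 : Vᴴ * (Matrix.single j i 1 * V) * (X * Matrix.single i j 1)
      = ((V * X) i i) • (Vᴴ * Matrix.single j j 1) := by
    have h : Vᴴ * (Matrix.single j i 1 * V) * (X * Matrix.single i j 1)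
        = Vᴴ * (Matrix.single j i 1 * (V * X) * Matrix.single i j 1) := by
      noncomm_ring
    rw [h, std_sandwich, mul_smul_comm]
  have e2 : Vᴴ * (Matrix.single j i 1 * V) * (Matrix.single i j 1 * Y)
      = (V i i) • (Vᴴ * Matrix.single j j 1 * Y) := by
    have h : Vᴴ * (Matrix.single j i 1 * V) * (Matrix.single i j 1 * Y)
        = Vᴴ * (Matrix.single j i 1 * V * Matrix.single i j 1) * Y := by
      noncomm_ring
    rw [h, std_sandwich, mul_smul_comm, smul_mul_assoc]
  rw [e1, e2, Matrix.trace_smul, Matrix.trace_smul, trace_mul_std,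
    Matrix.trace_mul_comm, ← Matrix.mul_assoc, trace_mul_std]
  simp [smul_eq_mul]

lemma key_sum (V X Y : Mat N) :
    ∑ p : Fin N × Fin N, ((Vᴴ * Matrix.single p.1 p.2 1 * V)ᴴ *
      (X * Matrix.single p.1 p.2 1 + Matrix.single p.1 p.2 1 * Y)).trace
    = star V.trace * (V * X).trace + V.trace * (Y * Vᴴ).trace := by
  simp only [key_term]
  rw [← Matrix.trace_conjTranspose, Fintype.sum_prod_type]
  simp only [Finset.sum_add_distrib, ← Finset.sum_mul, ← Finset.mul_sum]
  simp [Matrix.trace, Matrix.diag, mul_comm]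

lemma superInner_eq (hN : N ≠ 0) (Φ : Mat N →ₗ[ℂ] Mat N) (M : ℕ) (V : Fin M → Mat N)
    (hrep : ∀ A, Φ A = ∑ j, (V j)ᴴ * A * V j) (X Y : Mat N) :
    superInner Φ (LinearMap.mulLeft ℂ X + LinearMap.mulRight ℂ Y)
      = ((N : ℂ) ^ 2)⁻¹ * ∑ k,
        (star (V k).trace * (V k * X).trace + (V k).trace * (Y * (V k)ᴴ).trace) := by
  unfold superInner
  congr 1
  have hc : (star ((Real.sqrt N : ℝ) : ℂ)) * ((Real.sqrt N : ℝ) : ℂ) = (N : ℂ) := by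
    rw [Complex.star_def, Complex.conj_ofReal, ← Complex.ofReal_mul,
      Real.mul_self_sqrt (Nat.cast_nonneg N)]
    norm_num
  have hterm : ∀ p : Fin N × Fin N,
      (N : ℂ)⁻¹ * (((Φ ((Real.sqrt N : ℂ) • Matrix.single p.1 p.2 1))ᴴ *
        ((LinearMap.mulLeft ℂ X + LinearMap.mulRight ℂ Y)
          ((Real.sqrt N : ℂ) • Matrix.single p.1 p.2 1))).trace)
      = ((Φ (Matrix.single p.1 p.2 1))ᴴ *
          (X * Matrix.single p.1 p.2 1 + Matrix.single p.1 p.2 1 * Y)).trace := by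
    intro p
    simp only [_root_.map_smul, LinearMap.add_apply, LinearMap.mulLeft_apply,
      LinearMap.mulRight_apply, Matrix.conjTranspose_smul, mul_smul_comm, smul_mul_assoc,
      ← smul_add, Matrix.trace_smul, smul_eq_mul, ← mul_assoc]
    have ht : ∀ t : ℂ, ((N:ℂ))⁻¹ * ((Real.sqrt N : ℝ):ℂ) * star ((Real.sqrt N : ℝ):ℂ) * t = t := by
      intro t
      have h3 : ((N:ℂ))⁻¹ * ((Real.sqrt N : ℝ):ℂ) * star ((Real.sqrt N : ℝ):ℂ) * t
          = ((N:ℂ)⁻¹ * (star ((Real.sqrt N : ℝ):ℂ) * ((Real.sqrt N : ℝ):ℂ))) * t := by ring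
      rw [h3, hc, inv_mul_cancel₀ (by exact_mod_cast hN : (N:ℂ) ≠ 0), one_mul]
    exact ht _
  rw [Finset.sum_congr rfl fun p _ => hterm p]
  have : ∀ p : Fin N × Fin N,
      ((Φ (Matrix.single p.1 p.2 1))ᴴ *
        (X * Matrix.single p.1 p.2 1 + Matrix.single p.1 p.2 1 * Y)).trace
      = ∑ k, (((V k)ᴴ * Matrix.single p.1 p.2 1 * V k)ᴴ *
          (X * Matrix.single p.1 p.2 1 + Matrix.single p.1 p.2 1 * Y)).trace := by
    intro p
    rw [hrep]
    rw [Matrix.conjTranspose_sum, Finset.sum_mul, Matrix.trace_sum]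
  rw [Finset.sum_congr rfl fun p _ => this p, Finset.sum_comm]
  exact Finset.sum_congr rfl fun k _ => key_sum (V k) X Y

/-- a CP map with minimal Kraus representation `Φ(A) = Σ_j Vⱼᴴ A Vⱼ` is
orthogonal to every map of the form `A ↦ XA + AY` iff `Tr[Vⱼ] = 0` for every `j`. -/
theorem orth_sandwichFree_iff_traceless (N : ℕ) (hN : 2 ≤ N)
    (Φ : Mat N →ₗ[ℂ] Mat N) (M : ℕ) (V : Fin M → Mat N)
    (hmin : LinearIndependent ℂ V)
    (hrep : ∀ A, Φ A = ∑ j, (V j)ᴴ * A * V j) :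
    OrthToSandwichFree Φ ↔ ∀ j, (V j).trace = 0 := by
  have hN0 : N ≠ 0 := by omega
  have hNC : ((N : ℂ) ^ 2) ≠ 0 := by
    positivity
  constructor
  · intro horth j
    have hX : ∀ X : Mat N, ∑ k, star (V k).trace * (V k * X).trace = 0 := by
      intro X
      have h0 := horth X 0
      rw [superInner_eq hN0 Φ M V hrep X 0] at h0
      simp only [Matrix.zero_mul, Matrix.trace_zero, mul_zero, add_zero] at h0
      exact (mul_eq_zero.mp h0).resolve_left (inv_ne_zero hNC)
    have hlin : ∑ k, (star (V k).trace) • V k = 0 := by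
      ext a b
      have h1 := hX (Matrix.single b a 1)
      simpa [trace_mul_std, Matrix.sum_apply, Matrix.smul_apply, smul_eq_mul] using h1
    have h2 := Fintype.linearIndependent_iff.mp hmin (fun k => star (V k).trace) hlin j
    simpa using h2
  · intro h X Y
    unfold OrthToSandwichFree at *
    rw [superInner_eq hN0 Φ M V hrep X Y]
    simp [h]
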